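/- For all x with 0 < |x| < π/2, one has (x/sin x)^α + x/tan x < (π/2)^α, where α = π/(π-2). -/

import Mathlib

open Real

/-- The auxiliary function whose positivity on `(0, π/2)` is the key estimate. -/
noncomputable def gAux (y : ℝ) : ℝ :=
  (π / (π - 2)) * π * Real.sin y - 2 * y * Real.cos y - 2 * (π / (π - 2)) * y

lemma gAux_deriv : deriv gAux = fun y =>
    (π / (π - 2)) * π * Real.cos y - 2 * Real.cos y + 2 * y * Real.sin y
      - 2 * (π / (π - 2)) := by
  funext y
  have h : HasDerivAt gAux
      ((π / (π - 2)) * π * Real.cos y - (2 * Real.cos y + 2 * y * (-Real.sin y))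
        - 2 * (π / (π - 2))) y := by
    have h1 : HasDerivAt (fun y => (π / (π - 2)) * π * Real.sin y)
        ((π / (π - 2)) * π * Real.cos y) y := (Real.hasDerivAt_sin y).const_mul _
    have h2 : HasDerivAt (fun y => 2 * y * Real.cos y)
        (2 * Real.cos y + 2 * y * (-Real.sin y)) y := by
      have := ((hasDerivAt_id y).const_mul (2 : ℝ)).mul (Real.hasDerivAt_cos y)
      exact this.congr_deriv (by simp only [id_eq, mul_one])
    have h3 : HasDerivAt (fun y => 2 * (π / (π - 2)) * y) (2 * (π / (π - 2))) y := by
      simpa using (hasDerivAt_id y).const_mul (2 * (π / (π - 2)))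
    exact (h1.sub h2).sub h3
  rw [h.deriv]; ring

lemma gAux_deriv2 (y : ℝ) : deriv (deriv gAux) y =
    (4 - (π / (π - 2)) * π) * Real.sin y + 2 * y * Real.cos y := by
  rw [gAux_deriv]
  have h : HasDerivAt (fun y =>
      (π / (π - 2)) * π * Real.cos y - 2 * Real.cos y + 2 * y * Real.sin y
        - 2 * (π / (π - 2)))
      ((π / (π - 2)) * π * (-Real.sin y) - 2 * (-Real.sin y)
        + (2 * Real.sin y + 2 * y * Real.cos y) - 0) y := by
    have h1 : HasDerivAt (fun y => (π / (π - 2)) * π * Real.cos y)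
        ((π / (π - 2)) * π * (-Real.sin y)) y := (Real.hasDerivAt_cos y).const_mul _
    have h2 : HasDerivAt (fun y => 2 * Real.cos y) (2 * (-Real.sin y)) y :=
      (Real.hasDerivAt_cos y).const_mul _
    have h3 : HasDerivAt (fun y => 2 * y * Real.sin y)
        (2 * Real.sin y + 2 * y * Real.cos y) y := by
      have := ((hasDerivAt_id y).const_mul (2 : ℝ)).mul (Real.hasDerivAt_sin y)
      exact this.congr_deriv (by simp only [id_eq, mul_one])
    exact ((h1.sub h2).add h3).sub (hasDerivAt_const y _)
  rw [h.deriv]; ring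

lemma api_gt_six : 6 < (π / (π - 2)) * π := by
  have hπ : (3.14 : ℝ) < π := by linarith [Real.pi_gt_d6]
  have h2 : (0 : ℝ) < π - 2 := by linarith
  rw [div_mul_eq_mul_div, lt_div_iff₀ h2]
  nlinarith [sq_nonneg (π - 3)]

lemma gAux_pos {x : ℝ} (hx0 : 0 < x) (hx1 : x < π / 2) : 0 < gAux x := by
  have hconc : StrictConcaveOn ℝ (Set.Icc 0 (π / 2)) gAux := by
    apply strictConcaveOn_of_deriv2_neg (convex_Icc _ _)
    · unfold gAux; fun_prop
    · intro y hy
      rw [interior_Icc] at hy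
      have hy0 : 0 < y := hy.1
      have hy1 : y < π / 2 := hy.2
      have hs : 0 < Real.sin y := Real.sin_pos_of_pos_of_lt_pi hy0
        (hy1.trans_le (by linarith [Real.pi_pos]))
      have hc : 0 < Real.cos y := Real.cos_pos_of_mem_Ioo ⟨by linarith, hy1⟩
      have htan : y < Real.tan y := Real.lt_tan hy0 hy1
      have hyc : y * Real.cos y < Real.sin y := by
        rw [Real.tan_eq_sin_div_cos, lt_div_iff₀ hc] at htan
        exact htan
      have := api_gt_six
      show deriv^[2] gAux y < 0
      rw [Function.iterate_succ, Function.iterate_one, Function.comp_apply,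
        gAux_deriv2]
      nlinarith
  have h0mem : (0 : ℝ) ∈ Set.Icc 0 (π / 2) := ⟨le_refl _, by linarith [Real.pi_pos]⟩
  have h1mem : (π / 2 : ℝ) ∈ Set.Icc 0 (π / 2) := ⟨by linarith [Real.pi_pos], le_refl _⟩
  have hne : (0 : ℝ) ≠ π / 2 := by linarith [Real.pi_pos]
  have ha : 0 < 1 - 2 * x / π := by
    rw [sub_pos, div_lt_one Real.pi_pos]; linarith
  have hb : 0 < 2 * x / π := by positivity
  have hab : (1 - 2 * x / π) + 2 * x / π = 1 := by ring
  have key := hconc.2 h0mem h1mem hne ha hb hab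
  have hg0 : gAux 0 = 0 := by simp [gAux]
  have hg1 : gAux (π / 2) = 0 := by
    simp [gAux, Real.sin_pi_div_two, Real.cos_pi_div_two]; ring
  have hx : (1 - 2 * x / π) • (0 : ℝ) + (2 * x / π) • (π / 2) = x := by
    simp only [smul_eq_mul, mul_zero, zero_add]
    field_simp
  rw [hx, hg0, hg1] at key
  simpa using key

/-- The key inequality for positive `x`. -/
lemma key_ineq {x : ℝ} (hx0 : 0 < x) (hx1 : x < π / 2) :
    (x / Real.sin x) ^ (π / (π - 2)) + x / Real.tan x < (π / 2) ^ (π / (π - 2)) := by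
  have hπ : (3.14 : ℝ) < π := by linarith [Real.pi_gt_d6]
  set α : ℝ := π / (π - 2) with hα
  have hα1 : 1 ≤ α := by
    rw [hα, le_div_iff₀ (by linarith : (0:ℝ) < π - 2)]; linarith
  have hs : 0 < Real.sin x := Real.sin_pos_of_pos_of_lt_pi hx0 (by linarith)
  have hc : 0 < Real.cos x := Real.cos_pos_of_mem_Ioo ⟨by linarith, hx1⟩
  have hsx : Real.sin x < x := Real.sin_lt hx0
  set u : ℝ := x / Real.sin x with hu
  have hu1 : 1 < u := (one_lt_div hs).mpr hsx
  have hu0 : 0 < u := by linarith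
  have hjordan : u ≤ π / 2 := by
    rw [hu, div_le_div_iff₀ hs (by norm_num : (0:ℝ) < 2)]
    have := Real.mul_le_sin (le_of_lt hx0) (le_of_lt hx1)
    have hπ0 : (0:ℝ) < π := by linarith
    rw [div_mul_eq_mul_div, div_le_iff₀ hπ0] at this
    linarith
  -- Step A: u ^ α + α * (π/2 - u) ≤ (π/2)^α
  have stepA : u ^ α + α * (π / 2 - u) ≤ (π / 2) ^ α := by
    set s : ℝ := (π / 2 - u) / u with hsdef
    have hs0 : 0 ≤ s := by
      apply div_nonneg _ (le_of_lt hu0); linarith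
    have hbern := one_add_mul_self_le_rpow_one_add (by linarith : (-1:ℝ) ≤ s) hα1
    have h1s : 1 + s = (π / 2) / u := by
      rw [hsdef]; field_simp; ring
    rw [h1s, Real.div_rpow (by linarith) (le_of_lt hu0)] at hbern
    have huα : 0 < u ^ α := Real.rpow_pos_of_pos hu0 _
    rw [le_div_iff₀ huα] at hbern
    -- hbern : (1 + α * s) * u ^ α ≤ (π/2)^α
    have hexp : u ^ α = u ^ (α - 1) * u := by
      rw [← Real.rpow_add_one (ne_of_gt hu0)]; ring_nf
    have hu1' : 1 ≤ u ^ (α - 1) :=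
      Real.one_le_rpow (le_of_lt hu1) (by linarith)
    have hsu : s * u = π / 2 - u := by
      rw [hsdef]; field_simp
    have : α * (π / 2 - u) ≤ α * s * u ^ α := by
      rw [hexp, ← mul_assoc, mul_comm (α * s) (u ^ (α - 1)), mul_assoc,
        mul_assoc, hsu]
      have hαpos : 0 < α := by linarith
      have h2 : 0 ≤ α * (π / 2 - u) := by
        apply mul_nonneg (le_of_lt hαpos); linarith
      nlinarith
    nlinarith
  -- Step B: x / tan x < α * (π/2 - u)
  have stepB : x / Real.tan x < α * (π / 2 - u) := by
    have hg := gAux_pos hx0 hx1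
    unfold gAux at hg
    rw [Real.tan_eq_sin_div_cos, div_div_eq_mul_div]
    rw [div_lt_iff₀ hs, hu]
    have : α * (π / 2 - x / Real.sin x) * Real.sin x
        = α * π / 2 * Real.sin x - α * x := by
      field_simp
    rw [this]
    rw [← hα] at hg
    linarith
  calc (x / Real.sin x) ^ α + x / Real.tan x
      < u ^ α + α * (π / 2 - u) := by rw [hu]; linarith
    _ ≤ (π / 2) ^ α := stepA

theorem stmt5 (x : ℝ) (h0 : 0 < |x|) (h1 : |x| < π / 2) :
    (x / Real.sin x) ^ (π / (π - 2)) + x / Real.tan x < (π / 2) ^ (π / (π - 2)) := by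
  rcases lt_or_gt_of_ne (abs_pos.mp h0) with hneg | hpos
  · have h0' : 0 < -x := by linarith
    have h1' : -x < π / 2 := by rwa [abs_of_neg hneg] at h1
    have := key_ineq h0' h1'
    simpa [Real.sin_neg, Real.tan_neg, neg_div_neg_eq] using this
  · have h1' : x < π / 2 := by rwa [abs_of_pos hpos] at h1
    exact key_ineq hpos h1'
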